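/- Let R be a noncommutative finite (not necessarily unital) ring. Then |Cent(R)| = 4 if and only if the additive quotient group R/Z(R) is isomorphic (as an additive group) to ℤ_2 × ℤ_2. -/

import Mathlib

/-- The centralizer of `r` in a (not necessarily unital) ring: `{s | r*s = s*r}`. -/
def rCentralizer {R : Type*} [NonUnitalRing R] (r : R) : Set R := {s | r * s = s * r}

/-- The set of all centralizers of elements of `R`. -/
def Cent (R : Type*) [NonUnitalRing R] : Set (Set R) :=
  Set.range (fun r : R => rCentralizer r)

/-- The center of a (not necessarily unital) ring, as a set. -/
def rCenter (R : Type*) [NonUnitalRing R] : Set R := {s | ∀ r : R, r * s = s * r}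

/-- The center of a (not necessarily unital) ring, as an additive subgroup. -/
def centerAddSubgroup (R : Type*) [NonUnitalRing R] : AddSubgroup R where
  carrier := {s | ∀ r : R, r * s = s * r}
  zero_mem' := by intro r; rw [mul_zero, zero_mul]
  add_mem' := by intro a b ha hb r; rw [mul_add, add_mul, ha r, hb r]
  neg_mem' := by intro a ha r; rw [mul_neg, neg_mul, ha r]

namespace FourCentAux

variable {R : Type*} [NonUnitalRing R]

lemma mem_rCent {r s : R} : s ∈ rCentralizer r ↔ r * s = s * r := Iff.rfl

lemma rCent_zero : rCentralizer (0 : R) = Set.univ := by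
  ext s; simp [rCentralizer]

lemma rCent_self (r : R) : r ∈ rCentralizer r := rfl

lemma rCent_sub {r s t : R} (hs : s ∈ rCentralizer r) (ht : t ∈ rCentralizer r) :
    s - t ∈ rCentralizer r := by
  simp only [mem_rCent, mul_sub, sub_mul] at *
  rw [hs, ht]

lemma rCent_add {r s t : R} (hs : s ∈ rCentralizer r) (ht : t ∈ rCentralizer r) :
    s + t ∈ rCentralizer r := by
  simp only [mem_rCent, mul_add, add_mul] at *
  rw [hs, ht]

lemma sub_mem_of_cent {X : Set R} (hX : X ∈ Cent R) {s t : R}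
    (hs : s ∈ X) (ht : t ∈ X) : s - t ∈ X := by
  obtain ⟨r, rfl⟩ := hX
  exact rCent_sub hs ht

lemma add_mem_of_cent {X : Set R} (hX : X ∈ Cent R) {s t : R}
    (hs : s ∈ X) (ht : t ∈ X) : s + t ∈ X := by
  obtain ⟨r, rfl⟩ := hX
  exact rCent_add hs ht

lemma mem_centerAS {x : R} : x ∈ centerAddSubgroup R ↔ ∀ r : R, r * x = x * r := Iff.rfl

lemma center_mem_cent {x : R} (hx : x ∈ centerAddSubgroup R) {X : Set R} (hX : X ∈ Cent R) :
    x ∈ X := by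
  obtain ⟨r, rfl⟩ := hX
  exact hx r

/-- If `x` and `u` are in the same coset of the center, they have the same centralizer. -/
lemma rCent_congr {x u : R} (hxu : x - u ∈ centerAddSubgroup R) :
    rCentralizer x = rCentralizer u := by
  ext s
  have h1 : x * s = u * s + (x - u) * s := by rw [← add_mul, add_sub_cancel]
  have h2 : s * x = s * u + (x - u) * s := by rw [← hxu s, ← mul_add, add_sub_cancel]
  simp only [mem_rCent, h1, h2, add_left_inj]

lemma comm_of_coset {x y u v : R} (hx : x - u ∈ centerAddSubgroup R)
    (hy : y - v ∈ centerAddSubgroup R) (huv : u * v = v * u) : x * y = y * x := by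
  have hxe : (x - u) + u = x := by abel
  have hye : (y - v) + v = y := by abel
  rw [← hxe, ← hye]
  simp only [add_mul, mul_add]
  rw [hx (y - v), hx v, ← hy u, huv]
  abel

lemma zmod2_cases : ∀ i : ZMod 2, i = 0 ∨ i = 1 := by decide

lemma zmod2sq_cases : ∀ p : ZMod 2 × ZMod 2,
    p = (0, 0) ∨ p = (1, 0) ∨ p = (0, 1) ∨ p = (1, 1) := by decide

/-- Build the isomorphism `R/Z ≃ ZMod 2 × ZMod 2` from coset data. -/
lemma equiv_of_data {a b : R}
    (ha : a ∉ centerAddSubgroup R) (hb : b ∉ centerAddSubgroup R)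
    (hab : a - b ∉ centerAddSubgroup R)
    (ha2 : a + a ∈ centerAddSubgroup R) (hb2 : b + b ∈ centerAddSubgroup R)
    (hcover : ∀ x : R, x ∈ centerAddSubgroup R ∨ x - a ∈ centerAddSubgroup R ∨
      x - b ∈ centerAddSubgroup R ∨ x - (a + b) ∈ centerAddSubgroup R) :
    Nonempty ((R ⧸ centerAddSubgroup R) ≃+ (ZMod 2 × ZMod 2)) := by
  set N := centerAddSubgroup R with hN
  let qa : R ⧸ N := QuotientAddGroup.mk a
  let qb : R ⧸ N := QuotientAddGroup.mk b
  have hqa2 : qa + qa = 0 := by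
    show ((a + a : R) : R ⧸ N) = 0
    exact (QuotientAddGroup.eq_zero_iff _).2 ha2
  have hqb2 : qb + qb = 0 := by
    show ((b + b : R) : R ⧸ N) = 0
    exact (QuotientAddGroup.eq_zero_iff _).2 hb2
  have hqa0 : qa ≠ 0 := fun hc => ha ((QuotientAddGroup.eq_zero_iff _).1 hc)
  have hqb0 : qb ≠ 0 := fun hc => hb ((QuotientAddGroup.eq_zero_iff _).1 hc)
  have hqab : qa ≠ qb := by
    intro hc
    exact hab (QuotientAddGroup.eq_iff_sub_mem.1 hc)
  -- the candidate map
  set g : ZMod 2 × ZMod 2 → R ⧸ N := fun p => p.1.val • qa + p.2.val • qb with hg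
  have hsmul : ∀ (i j : ZMod 2) (q : R ⧸ N), q + q = 0 →
      (i + j).val • q = i.val • q + j.val • q := by
    intro i j q hq
    rcases zmod2_cases i with rfl | rfl <;> rcases zmod2_cases j with rfl | rfl <;>
      simp [ZMod.val_one, show ((1 : ZMod 2) + 1) = 0 by decide, two_nsmul, hq]
  have hgadd : ∀ p q : ZMod 2 × ZMod 2, g (p + q) = g p + g q := by
    intro p q
    simp only [hg, Prod.fst_add, Prod.snd_add, hsmul p.1 q.1 qa hqa2, hsmul p.2 q.2 qb hqb2]
    abel
  let G : (ZMod 2 × ZMod 2) →+ (R ⧸ N) := AddMonoidHom.mk' g hgadd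
  have hG10 : G (1, 0) = qa := by simp [G, AddMonoidHom.mk'_apply, hg, ZMod.val_one]
  have hG01 : G (0, 1) = qb := by simp [G, AddMonoidHom.mk'_apply, hg, ZMod.val_one]
  have hG11 : G (1, 1) = qa + qb := by simp [G, AddMonoidHom.mk'_apply, hg, ZMod.val_one]
  have hG00 : G (0, 0) = 0 := by simp [G, AddMonoidHom.mk'_apply, hg]
  have hsurj : Function.Surjective G := by
    intro q
    induction q using QuotientAddGroup.induction_on with
    | H x =>
      rcases hcover x with hx | hx | hx | hx
      · exact ⟨(0, 0), by rw [hG00]; exact ((QuotientAddGroup.eq_zero_iff _).2 hx).symm⟩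
      · exact ⟨(1, 0), by rw [hG10]; exact (QuotientAddGroup.eq_iff_sub_mem.2 hx).symm⟩
      · exact ⟨(0, 1), by rw [hG01]; exact (QuotientAddGroup.eq_iff_sub_mem.2 hx).symm⟩
      · refine ⟨(1, 1), ?_⟩
        rw [hG11]
        show (a : R ⧸ N) + (b : R ⧸ N) = _
        rw [← QuotientAddGroup.mk_add]
        exact (QuotientAddGroup.eq_iff_sub_mem.2 hx).symm
  have hinj : Function.Injective G := by
    rw [injective_iff_map_eq_zero]
    intro p hp
    rcases zmod2sq_cases p with rfl | rfl | rfl | rfl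
    · rfl
    · rw [hG10] at hp; exact absurd hp hqa0
    · rw [hG01] at hp; exact absurd hp hqb0
    · rw [hG11] at hp
      have : qa = qb := by
        have hnb : -qb = qb := by
          rw [neg_eq_iff_add_eq_zero, hqb2]
        rw [← hnb]
        exact eq_neg_of_add_eq_zero_left hp
      exact absurd this hqab
  exact ⟨(AddEquiv.ofBijective G ⟨hinj, hsurj⟩).symm⟩

/-- Extract coset data from an isomorphism. -/
lemma data_of_equiv (e : (R ⧸ centerAddSubgroup R) ≃+ (ZMod 2 × ZMod 2)) :
    ∃ a b : R, a ∉ centerAddSubgroup R ∧ b ∉ centerAddSubgroup R ∧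
      a - b ∉ centerAddSubgroup R ∧
      (∀ x : R, x ∈ centerAddSubgroup R ∨ x - a ∈ centerAddSubgroup R ∨
        x - b ∈ centerAddSubgroup R ∨ x - (a + b) ∈ centerAddSubgroup R) := by
  set N := centerAddSubgroup R with hN
  obtain ⟨a, ha⟩ := QuotientAddGroup.mk_surjective (e.symm (1, 0))
  obtain ⟨b, hb⟩ := QuotientAddGroup.mk_surjective (e.symm (0, 1))
  have hea : e ((a : R ⧸ N)) = (1, 0) := by rw [ha, AddEquiv.apply_symm_apply]
  have heb : e ((b : R ⧸ N)) = (0, 1) := by rw [hb, AddEquiv.apply_symm_apply]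
  have heab : e (((a + b : R) : R ⧸ N)) = (1, 1) := by
    have hmk : ((a + b : R) : R ⧸ N) = (a : R ⧸ N) + (b : R ⧸ N) := rfl
    rw [hmk, map_add, hea, heb]
    decide
  refine ⟨a, b, ?_, ?_, ?_, ?_⟩
  · intro hc
    have : ((a : R ⧸ N)) = 0 := (QuotientAddGroup.eq_zero_iff _).2 hc
    rw [this, map_zero] at hea
    exact absurd hea (by decide)
  · intro hc
    have : ((b : R ⧸ N)) = 0 := (QuotientAddGroup.eq_zero_iff _).2 hc
    rw [this, map_zero] at heb
    exact absurd heb (by decide)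
  · intro hc
    have : ((a : R ⧸ N)) = ((b : R ⧸ N)) := QuotientAddGroup.eq_iff_sub_mem.2 hc
    rw [this, heb] at hea
    exact absurd hea (by decide)
  · intro x
    rcases zmod2sq_cases (e ((x : R ⧸ N))) with hx | hx | hx | hx
    · left
      have : ((x : R ⧸ N)) = 0 := by
        apply e.injective; rw [hx, map_zero]; rfl
      exact (QuotientAddGroup.eq_zero_iff _).1 this
    · right; left
      have : ((x : R ⧸ N)) = ((a : R ⧸ N)) := by
        apply e.injective; rw [hx, hea]
      exact QuotientAddGroup.eq_iff_sub_mem.1 this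
    · right; right; left
      have : ((x : R ⧸ N)) = ((b : R ⧸ N)) := by
        apply e.injective; rw [hx, heb]
      exact QuotientAddGroup.eq_iff_sub_mem.1 this
    · right; right; right
      have : ((x : R ⧸ N)) = (((a + b : R)) : R ⧸ N) := by
        apply e.injective; rw [hx, heab]
      exact QuotientAddGroup.eq_iff_sub_mem.1 this

/-- Backward direction: coset data + noncommutativity implies exactly 4 centralizers. -/
lemma ncard_eq_four_of_data {a b : R}
    (hncomm : ∃ x y : R, x * y ≠ y * x)
    (ha : a ∉ centerAddSubgroup R) (hb : b ∉ centerAddSubgroup R)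
    (hab : a - b ∉ centerAddSubgroup R)
    (hcover : ∀ x : R, x ∈ centerAddSubgroup R ∨ x - a ∈ centerAddSubgroup R ∨
      x - b ∈ centerAddSubgroup R ∨ x - (a + b) ∈ centerAddSubgroup R) :
    (Cent R).ncard = 4 := by
  set N := centerAddSubgroup R with hN
  have hcover' : ∀ x : R, ∃ u : R, (u = 0 ∨ u = a ∨ u = b ∨ u = a + b) ∧ x - u ∈ N := by
    intro x
    rcases hcover x with hx | hx | hx | hx
    · exact ⟨0, Or.inl rfl, by rwa [sub_zero]⟩
    · exact ⟨a, Or.inr (Or.inl rfl), hx⟩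
    · exact ⟨b, Or.inr (Or.inr (Or.inl rfl)), hx⟩
    · exact ⟨a + b, Or.inr (Or.inr (Or.inr rfl)), hx⟩
  -- a and b do not commute
  have hba : a * b ≠ b * a := by
    intro hcomm
    obtain ⟨x, y, hxy⟩ := hncomm
    apply hxy
    have key : ∀ u v : R, (u = 0 ∨ u = a ∨ u = b ∨ u = a + b) →
        (v = 0 ∨ v = a ∨ v = b ∨ v = a + b) → u * v = v * u := by
      rintro u v (rfl | rfl | rfl | rfl) (rfl | rfl | rfl | rfl) <;>
        simp [mul_add, add_mul, hcomm]
    obtain ⟨u, hu, hxu⟩ := hcover' x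
    obtain ⟨v, hv, hyv⟩ := hcover' y
    exact comm_of_coset hxu hyv (key u v hu hv)
  -- membership facts
  have hbCa : b ∉ rCentralizer a := hba
  have haCb : a ∉ rCentralizer b := fun hc => hba hc.symm
  have haCab : a ∉ rCentralizer (a + b) := by
    intro hc
    rw [mem_rCent, add_mul, mul_add] at hc
    exact hba (add_left_cancel hc).symm
  have hbCab : b ∉ rCentralizer (a + b) := by
    intro hc
    rw [mem_rCent, add_mul, mul_add] at hc
    have : a * b = b * a := by
      have h2 := hc
      exact add_right_cancel h2
    exact hba this
  -- classification of all centralizers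
  have hclass : ∀ r : R, rCentralizer r = Set.univ ∨ rCentralizer r = rCentralizer a ∨
      rCentralizer r = rCentralizer b ∨ rCentralizer r = rCentralizer (a + b) := by
    intro r
    rcases hcover r with hr | hr | hr | hr
    · left
      have : rCentralizer r = rCentralizer (0 : R) := rCent_congr (by rwa [sub_zero])
      rw [this, rCent_zero]
    · right; left; exact rCent_congr hr
    · right; right; left; exact rCent_congr hr
    · right; right; right; exact rCent_congr hr
  have hCent_eq : Cent R = {Set.univ, rCentralizer a, rCentralizer b, rCentralizer (a + b)} := by
    ext S
    constructor
    · rintro ⟨r, rfl⟩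
      rcases hclass r with hc | hc | hc | hc <;> simp [hc]
    · intro hS
      rcases hS with rfl | rfl | rfl | rfl
      · exact ⟨0, rCent_zero⟩
      · exact ⟨a, rfl⟩
      · exact ⟨b, rfl⟩
      · exact ⟨a + b, rfl⟩
  -- distinctness
  have hu_a : Set.univ ≠ rCentralizer a := fun hc => hbCa (hc ▸ Set.mem_univ b)
  have hu_b : Set.univ ≠ rCentralizer b := fun hc => haCb (hc ▸ Set.mem_univ a)
  have hu_ab : Set.univ ≠ rCentralizer (a + b) := fun hc => haCab (hc ▸ Set.mem_univ a)
  have ha_b : rCentralizer a ≠ rCentralizer b := fun hc => haCb (hc ▸ rCent_self a)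
  have ha_ab : rCentralizer a ≠ rCentralizer (a + b) := fun hc => haCab (hc ▸ rCent_self a)
  have hb_ab : rCentralizer b ≠ rCentralizer (a + b) := fun hc => hbCab (hc ▸ rCent_self b)
  rw [hCent_eq]
  rw [Set.ncard_insert_of_notMem (by simp [hu_a, hu_b, hu_ab]),
    Set.ncard_insert_of_notMem (by simp [ha_b, ha_ab]),
    Set.ncard_insert_of_notMem (by simp [hb_ab]),
    Set.ncard_singleton]


/-- Forward direction: exactly 4 centralizers yields coset data. -/
lemma data_of_four [Finite R] (hcard : (Cent R).ncard = 4) :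
    ∃ a b : R, a ∉ centerAddSubgroup R ∧ b ∉ centerAddSubgroup R ∧
      a - b ∉ centerAddSubgroup R ∧ a + a ∈ centerAddSubgroup R ∧
      b + b ∈ centerAddSubgroup R ∧
      (∀ x : R, x ∈ centerAddSubgroup R ∨ x - a ∈ centerAddSubgroup R ∨
        x - b ∈ centerAddSubgroup R ∨ x - (a + b) ∈ centerAddSubgroup R) := by
  set N := centerAddSubgroup R with hNdef
  have hfin : (Cent R).Finite := Set.finite_range _
  have huniv : Set.univ ∈ Cent R := ⟨0, rCent_zero⟩
  have hdiff : (Cent R \ {Set.univ}).ncard = 3 := by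
    rw [Set.ncard_diff_singleton_of_mem huniv, hcard]
  obtain ⟨A, B, C, hAB, hAC, hBC, hset⟩ := Set.ncard_eq_three.mp hdiff
  have hmem3 : ∀ X : Set R, X = A ∨ X = B ∨ X = C → X ∈ Cent R ∧ X ≠ Set.univ := by
    intro X hX
    have : X ∈ Cent R \ {Set.univ} := by rw [hset]; simpa using hX
    exact ⟨this.1, fun hc => this.2 (by rw [hc]; rfl)⟩
  have hAc : A ∈ Cent R := (hmem3 A (Or.inl rfl)).1
  have hBc : B ∈ Cent R := (hmem3 B (Or.inr (Or.inl rfl))).1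
  have hCc : C ∈ Cent R := (hmem3 C (Or.inr (Or.inr rfl))).1
  have hAu : A ≠ Set.univ := (hmem3 A (Or.inl rfl)).2
  have hBu : B ≠ Set.univ := (hmem3 B (Or.inr (Or.inl rfl))).2
  have hCu : C ≠ Set.univ := (hmem3 C (Or.inr (Or.inr rfl))).2
  -- classification of centralizers
  have hclass : ∀ r : R, rCentralizer r = Set.univ ∨ rCentralizer r = A ∨
      rCentralizer r = B ∨ rCentralizer r = C := by
    intro r
    by_cases hru : rCentralizer r = Set.univ
    · exact Or.inl hru
    · have : rCentralizer r ∈ Cent R \ {Set.univ} := ⟨⟨r, rfl⟩, hru⟩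
      rw [hset] at this
      simpa using Or.inr this
  -- R is covered by A, B, C
  have cover3 : ∀ x : R, x ∈ A ∨ x ∈ B ∨ x ∈ C := by
    intro x
    rcases hclass x with hx | hx | hx | hx
    · left
      have hxc : x ∈ N := by
        show ∀ r : R, r * x = x * r
        intro r
        have : r ∈ rCentralizer x := by rw [hx]; trivial
        exact this.symm
      exact center_mem_cent hxc hAc
    · exact Or.inl (hx ▸ rCent_self x)
    · exact Or.inr (Or.inl (hx ▸ rCent_self x))
    · exact Or.inr (Or.inr (hx ▸ rCent_self x))
  -- the center is the triple intersection
  have memN : ∀ s : R, s ∈ A → s ∈ B → s ∈ C → s ∈ N := by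
    intro s hA hB hC
    show ∀ r : R, r * s = s * r
    intro r
    rcases hclass r with hr | hr | hr | hr
    · have : s ∈ rCentralizer r := by rw [hr]; trivial
      exact this
    · exact (hr ▸ hA : s ∈ rCentralizer r)
    · exact (hr ▸ hB : s ∈ rCentralizer r)
    · exact (hr ▸ hC : s ∈ rCentralizer r)
  -- find elements in exactly one of the three sets
  have exclusive : ∀ X Y W : Set R, X ∈ Cent R → Y ∈ Cent R → W ∈ Cent R →
      (∀ t : R, t ∈ X ∨ t ∈ Y ∨ t ∈ W) → Y ≠ Set.univ → W ≠ Set.univ →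
      ∃ u : R, u ∈ X ∧ u ∉ Y ∧ u ∉ W := by
    intro X Y W hX hY hW hcov hYu hWu
    by_contra hno
    push_neg at hno
    have hcov2 : ∀ t : R, t ∈ Y ∨ t ∈ W := by
      intro t
      rcases hcov t with ht | ht | ht
      · by_cases hty : t ∈ Y
        · exact Or.inl hty
        · exact Or.inr (hno t ht hty)
      · exact Or.inl ht
      · exact Or.inr ht
    obtain ⟨y, hy⟩ := (Set.ne_univ_iff_exists_notMem Y).1 hYu
    obtain ⟨w, hw⟩ := (Set.ne_univ_iff_exists_notMem W).1 hWu
    have hyW : y ∈ W := (hcov2 y).resolve_left hy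
    have hwY : w ∈ Y := (hcov2 w).resolve_right hw
    rcases hcov2 (y + w) with hs | hs
    · refine hy ?_
      have := sub_mem_of_cent hY hs hwY
      rwa [show y + w - w = y from by abel] at this
    · refine hw ?_
      have := sub_mem_of_cent hW hs hyW
      rwa [show y + w - y = w from by abel] at this
  obtain ⟨a, haA, haB, haC⟩ := exclusive A B C hAc hBc hCc cover3 hBu hCu
  obtain ⟨b, hbB, hbA, hbC⟩ := exclusive B A C hBc hAc hCc
    (fun t => by rcases cover3 t with hh | hh | hh
                 exacts [Or.inr (Or.inl hh), Or.inl hh, Or.inr (Or.inr hh)]) hAu hCu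
  -- a + b is in C only
  have habA : a + b ∉ A := by
    intro hc
    have := sub_mem_of_cent hAc hc haA
    rw [show a + b - a = b from by abel] at this
    exact hbA this
  have habB : a + b ∉ B := by
    intro hc
    have := sub_mem_of_cent hBc hc hbB
    rw [show a + b - b = a from by abel] at this
    exact haB this
  have habC : a + b ∈ C := ((cover3 (a + b)).resolve_left habA).resolve_left habB
  -- generic intersection lemma
  have inter : ∀ X Y W : Set R, X ∈ Cent R → Y ∈ Cent R → W ∈ Cent R →
      (∀ s : R, s ∈ X ∨ s ∈ Y ∨ s ∈ W) →
      ∀ u v : R, u ∈ X → u ∉ Y → v ∈ Y → v ∉ X → u + v ∈ W →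
      ∀ t : R, t ∈ X → t ∈ Y → t ∈ W := by
    intro X Y W hX hY hW hcov u v huX huY hvY hvX huvW t htX htY
    by_contra htW
    rcases hcov (t + u + v) with hs | hs | hs
    · refine hvX ?_
      have := sub_mem_of_cent hX hs (add_mem_of_cent hX htX huX)
      rwa [show t + u + v - (t + u) = v from by abel] at this
    · refine huY ?_
      have := sub_mem_of_cent hY hs (add_mem_of_cent hY htY hvY)
      rwa [show t + u + v - (t + v) = u from by abel] at this
    · refine htW ?_
      have := sub_mem_of_cent hW hs huvW
      rwa [show t + u + v - (u + v) = t from by abel] at this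
  have hauxAC : a + (a + b) ∈ B := by
    have hnA : a + (a + b) ∉ A := by
      intro hc
      have := sub_mem_of_cent hAc hc haA
      rw [show a + (a + b) - a = a + b from by abel] at this
      exact habA this
    have hnC : a + (a + b) ∉ C := by
      intro hc
      have := sub_mem_of_cent hCc hc habC
      rw [show a + (a + b) - (a + b) = a from by abel] at this
      exact haC this
    rcases cover3 (a + (a + b)) with hh | hh | hh
    exacts [absurd hh hnA, hh, absurd hh hnC]
  have hauxBC : b + (a + b) ∈ A := by
    have hnB : b + (a + b) ∉ B := by
      intro hc
      have := sub_mem_of_cent hBc hc hbB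
      rw [show b + (a + b) - b = a + b from by abel] at this
      exact habB this
    have hnC : b + (a + b) ∉ C := by
      intro hc
      have := sub_mem_of_cent hCc hc habC
      rw [show b + (a + b) - (a + b) = b from by abel] at this
      exact hbC this
    rcases cover3 (b + (a + b)) with hh | hh | hh
    exacts [hh, absurd hh hnB, absurd hh hnC]
  have interAB : ∀ t : R, t ∈ A → t ∈ B → t ∈ N := fun t h1 h2 =>
    memN t h1 h2 (inter A B C hAc hBc hCc cover3 a b haA haB hbB hbA habC t h1 h2)
  have interAC : ∀ t : R, t ∈ A → t ∈ C → t ∈ N := fun t h1 h2 =>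
    memN t h1 (inter A C B hAc hCc hBc
      (fun s => by rcases cover3 s with hh | hh | hh
                   exacts [Or.inl hh, Or.inr (Or.inr hh), Or.inr (Or.inl hh)]) a (a + b)
      haA haC habC habA hauxAC t h1 h2) h2
  have interBC : ∀ t : R, t ∈ B → t ∈ C → t ∈ N := fun t h1 h2 =>
    memN t (inter B C A hBc hCc hAc
      (fun s => by rcases cover3 s with hh | hh | hh
                   exacts [Or.inr (Or.inr hh), Or.inl hh, Or.inr (Or.inl hh)]) b (a + b)
      hbB hbC habC habB hauxBC t h1 h2) h1 h2
  have haN : a ∉ N := fun hn => haB (center_mem_cent hn hBc)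
  have hbN : b ∉ N := fun hn => hbA (center_mem_cent hn hAc)
  have habN : a + b ∉ N := fun hn => habA (center_mem_cent hn hAc)
  have hsubN : a - b ∉ N := by
    intro hn
    have := sub_mem_of_cent hAc haA (center_mem_cent hn hAc)
    rw [show a - (a - b) = b from by abel] at this
    exact hbA this
  have stepC : ∀ x : R, x ∈ C → x ∉ N → x + (a + b) ∈ N := by
    intro x hxC hxN
    have hxA : x ∉ A := fun hc => hxN (interAC x hc hxC)
    have hxB : x ∉ B := fun hc => hxN (interBC x hc hxC)
    have hxaB : x + a ∈ B := by
      have hnA : x + a ∉ A := by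
        intro hc
        have := sub_mem_of_cent hAc hc haA
        rw [show x + a - a = x from by abel] at this
        exact hxA this
      have hnC : x + a ∉ C := by
        intro hc
        have := sub_mem_of_cent hCc hc hxC
        rw [show x + a - x = a from by abel] at this
        exact haC this
      rcases cover3 (x + a) with hh | hh | hh
      exacts [absurd hh hnA, hh, absurd hh hnC]
    have hxbA : x + b ∈ A := by
      have hnB : x + b ∉ B := by
        intro hc
        have := sub_mem_of_cent hBc hc hbB
        rw [show x + b - b = x from by abel] at this
        exact hxB this
      have hnC : x + b ∉ C := by
        intro hc
        have := sub_mem_of_cent hCc hc hxC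
        rw [show x + b - x = b from by abel] at this
        exact hbC this
      rcases cover3 (x + b) with hh | hh | hh
      exacts [hh, absurd hh hnB, absurd hh hnC]
    have hInA : x + (a + b) ∈ A := by
      have := add_mem_of_cent hAc hxbA haA
      rwa [show x + b + a = x + (a + b) from by abel] at this
    have hInB : x + (a + b) ∈ B := by
      have := add_mem_of_cent hBc hxaB hbB
      rwa [show x + a + b = x + (a + b) from by abel] at this
    exact interAB _ hInA hInB
  have h2ab : a + b + (a + b) ∈ N := stepC (a + b) habC habN
  have h2a : a + a ∈ N := by
    by_contra h2a'
    have h2aA : a + a ∈ A := add_mem_of_cent hAc haA haA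
    have h2aB : a + a ∉ B := fun hc => h2a' (interAB _ h2aA hc)
    have hsA : a + a + b ∉ A := by
      intro hc
      have := sub_mem_of_cent hAc hc h2aA
      rw [show a + a + b - (a + a) = b from by abel] at this
      exact hbA this
    have hsB : a + a + b ∉ B := by
      intro hc
      have := sub_mem_of_cent hBc hc hbB
      rw [show a + a + b - b = a + a from by abel] at this
      exact h2aB this
    have hsC : a + a + b ∈ C := by
      rcases cover3 (a + a + b) with hh | hh | hh
      exacts [absurd hh hsA, absurd hh hsB, hh]
    have hsN : a + a + b ∉ N := fun hn => hsB (center_mem_cent hn hBc)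
    have hstep := stepC _ hsC hsN
    have hfin2 := N.sub_mem hstep h2ab
    rw [show a + a + b + (a + b) - (a + b + (a + b)) = a from by abel] at hfin2
    exact haN hfin2
  have h2b : b + b ∈ N := by
    by_contra h2b'
    have h2bB : b + b ∈ B := add_mem_of_cent hBc hbB hbB
    have h2bA : b + b ∉ A := fun hc => h2b' (interAB _ hc h2bB)
    have hsA : b + b + a ∉ A := by
      intro hc
      have := sub_mem_of_cent hAc hc haA
      rw [show b + b + a - a = b + b from by abel] at this
      exact h2bA this
    have hsB : b + b + a ∉ B := by
      intro hc
      have := sub_mem_of_cent hBc hc h2bB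
      rw [show b + b + a - (b + b) = a from by abel] at this
      exact haB this
    have hsC : b + b + a ∈ C := by
      rcases cover3 (b + b + a) with hh | hh | hh
      exacts [absurd hh hsA, absurd hh hsB, hh]
    have hsN : b + b + a ∉ N := fun hn => hsA (center_mem_cent hn hAc)
    have hstep := stepC _ hsC hsN
    have hfin2 := N.sub_mem hstep h2ab
    rw [show b + b + a + (a + b) - (a + b + (a + b)) = b from by abel] at hfin2
    exact hbN hfin2
  refine ⟨a, b, haN, hbN, hsubN, h2a, h2b, ?_⟩
  intro x
  rcases cover3 x with hxA | hxB | hxC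
  · by_cases hxN : x ∈ N
    · exact Or.inl hxN
    right; left
    have hxB' : x ∉ B := fun hc => hxN (interAB x hxA hc)
    have hsA : x + b ∉ A := by
      intro hc
      have := sub_mem_of_cent hAc hc hxA
      rw [show x + b - x = b from by abel] at this
      exact hbA this
    have hsB : x + b ∉ B := by
      intro hc
      have := sub_mem_of_cent hBc hc hbB
      rw [show x + b - b = x from by abel] at this
      exact hxB' this
    have hsC : x + b ∈ C := by
      rcases cover3 (x + b) with hh | hh | hh
      exacts [absurd hh hsA, absurd hh hsB, hh]
    have hsN : x + b ∉ N := fun hn => hsA (center_mem_cent hn hAc)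
    have hstep := stepC _ hsC hsN
    have h1 := N.sub_mem (N.sub_mem hstep h2a) h2b
    rwa [show x + b + (a + b) - (a + a) - (b + b) = x - a from by abel] at h1
  · by_cases hxN : x ∈ N
    · exact Or.inl hxN
    right; right; left
    have hxA' : x ∉ A := fun hc => hxN (interAB x hc hxB)
    have hsB : x + a ∉ B := by
      intro hc
      have := sub_mem_of_cent hBc hc hxB
      rw [show x + a - x = a from by abel] at this
      exact haB this
    have hsA : x + a ∉ A := by
      intro hc
      have := sub_mem_of_cent hAc hc haA
      rw [show x + a - a = x from by abel] at this
      exact hxA' this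
    have hsC : x + a ∈ C := by
      rcases cover3 (x + a) with hh | hh | hh
      exacts [absurd hh hsA, absurd hh hsB, hh]
    have hsN : x + a ∉ N := fun hn => hsB (center_mem_cent hn hBc)
    have hstep := stepC _ hsC hsN
    have h1 := N.sub_mem (N.sub_mem hstep h2a) h2b
    rwa [show x + a + (a + b) - (a + a) - (b + b) = x - b from by abel] at h1
  · by_cases hxN : x ∈ N
    · exact Or.inl hxN
    right; right; right
    have hstep := stepC x hxC hxN
    have h1 := N.sub_mem hstep h2ab
    rwa [show x + (a + b) - (a + b + (a + b)) = x - (a + b) from by abel] at h1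

end FourCentAux

/-- A noncommutative finite ring has exactly `4` centralizers iff
`R/Z(R) ≅ ℤ_2 × ℤ_2` as additive groups. -/
theorem four_centralizer_iff (R : Type*) [NonUnitalRing R] [Finite R]
    (h : ∃ x y : R, x * y ≠ y * x) :
    (Cent R).ncard = 4 ↔
      Nonempty ((R ⧸ centerAddSubgroup R) ≃+ (ZMod 2 × ZMod 2)) := by
  constructor
  · intro hcard
    obtain ⟨a, b, ha, hb, hab, ha2, hb2, hcover⟩ := FourCentAux.data_of_four hcard
    exact FourCentAux.equiv_of_data ha hb hab ha2 hb2 hcover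
  · rintro ⟨e⟩
    obtain ⟨a, b, ha, hb, hab, hcover⟩ := FourCentAux.data_of_equiv e
    exact FourCentAux.ncard_eq_four_of_data h ha hb hab hcover
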